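/- Let X be a differentiable family of Hermitian rank-1 projectors projecting onto a differentiable nonvanishing vector x(ξ₊,ξ₋). Then x is holomorphic up to scaling (i.e., ∂₋(c·x) = 0 for some nonvanishing scalar function c) if and only if ∂₋x is pointwise proportional to x. -/

import Mathlib

open Matrix

/-- Entrywise partial derivative of a vector family in the first real coordinate. -/
noncomputable def vpd1 {N : ℕ} (f : ℝ × ℝ → Fin N → ℂ) (p : ℝ × ℝ) : Fin N → ℂ :=
  fun i => fderiv ℝ (fun q => f q i) p (1, 0)

/-- Entrywise partial derivative of a vector family in the second real coordinate. -/
noncomputable def vpd2 {N : ℕ} (f : ℝ × ℝ → Fin N → ℂ) (p : ℝ × ℝ) : Fin N → ℂ :=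
  fun i => fderiv ℝ (fun q => f q i) p (0, 1)

/-- `∂₋ = (∂₁ + i∂₂)/2` for vector families. -/
noncomputable def vpdm {N : ℕ} (f : ℝ × ℝ → Fin N → ℂ) (p : ℝ × ℝ) : Fin N → ℂ :=
  ((1 : ℂ) / 2) • (vpd1 f p + Complex.I • vpd2 f p)

open Complex Filter Set Metric

noncomputable def dm (f : ℂ → ℂ) (z : ℂ) : ℂ :=
  (fderiv ℝ f z 1 + Complex.I * fderiv ℝ f z Complex.I) / 2

lemma dm_eq_zero_of_cdiff {f : ℂ → ℂ} {z : ℂ} (h : DifferentiableAt ℂ f z) :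
    dm f z = 0 := by
  have hr := h.hasFDerivAt.restrictScalars ℝ
  have hfd : fderiv ℝ f z = (fderiv ℂ f z).restrictScalars ℝ := hr.fderiv
  have h1 : fderiv ℝ f z 1 = fderiv ℂ f z 1 := by rw [hfd]; rfl
  have hI : fderiv ℝ f z Complex.I = fderiv ℂ f z Complex.I := by rw [hfd]; rfl
  have hlin : fderiv ℂ f z Complex.I = Complex.I * fderiv ℂ f z 1 := by
    have := (fderiv ℂ f z).map_smul Complex.I (1 : ℂ)
    simpa [smul_eq_mul] using this
  simp only [dm, h1, hI, hlin]
  linear_combination (fderiv ℂ f z 1 / 2) * Complex.I_mul_I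

lemma cdiff_of_dm {f : ℂ → ℂ} {z : ℂ} (hR : DifferentiableAt ℝ f z) (h : dm f z = 0) :
    DifferentiableAt ℂ f z := by
  set L := fderiv ℝ f z with hL
  have h' : L 1 + Complex.I * L Complex.I = 0 := by
    simp only [dm, ← hL, div_eq_zero_iff] at h
    rcases h with h'' | h''
    · exact h''
    · norm_num at h''
  have hCR : L Complex.I = Complex.I * L 1 := by
    linear_combination (-Complex.I) * h' + (L Complex.I) * Complex.I_mul_I
  set c := L 1 with hc
  let L' : ℂ →L[ℂ] ℂ := c • ContinuousLinearMap.id ℂ ℂ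
  have hext : ∀ w : ℂ, L w = L' w := by
    intro w
    have hw : w = (w.re : ℝ) • (1 : ℂ) + (w.im : ℝ) • Complex.I := by
      simp only [real_smul, smul_eq_mul, mul_one]
      simpa using (Complex.re_add_im w).symm
    have hLw : L w = (w.re : ℂ) * L 1 + (w.im : ℂ) * L Complex.I := by
      conv_lhs => rw [hw]
      rw [map_add, _root_.map_smul, _root_.map_smul]
      simp [real_smul]
    have hL'w : L' w = c * w := by
      simp [L', smul_eq_mul]
    rw [hLw, hL'w, hCR, ← hc]
    linear_combination c * (Complex.re_add_im w)
  refine ⟨L', ?_⟩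
  have hr : HasFDerivAt f L z := hR.hasFDerivAt
  rw [hasFDerivAt_iff_isLittleO_nhds_zero] at hr ⊢
  have heq : (fun h : ℂ => f (z + h) - f z - L' h) = fun h : ℂ => f (z + h) - f z - L h := by
    funext w; rw [hext w]
  rw [heq]
  exact hr

lemma dm_mul {f g : ℂ → ℂ} {z : ℂ} (hf : DifferentiableAt ℝ f z) (hg : DifferentiableAt ℝ g z) :
    dm (fun w => f w * g w) z = f z * dm g z + g z * dm f z := by
  have h := fderiv_fun_mul (𝕜 := ℝ) hf hg
  simp only [dm, h, ContinuousLinearMap.add_apply, ContinuousLinearMap.smul_apply, smul_eq_mul]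
  ring

lemma dm_inv {g : ℂ → ℂ} {z : ℂ} (hg : DifferentiableAt ℝ g z) (hgz : g z ≠ 0) :
    dm (fun w => (g w)⁻¹) z = -((g z)⁻¹ * (g z)⁻¹) * dm g z := by
  have hinv : DifferentiableAt ℝ (fun x : ℂ => x⁻¹) (g z) := differentiableAt_inv hgz
  have hcomp : fderiv ℝ (fun w => (g w)⁻¹) z = (fderiv ℝ (fun x : ℂ => x⁻¹) (g z)).comp (fderiv ℝ g z) :=
    fderiv_comp z hinv hg
  have hi : fderiv ℝ (fun x : ℂ => x⁻¹) (g z) = fderiv ℝ (Inv.inv : ℂ → ℂ) (g z) := rfl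
  simp only [dm, hcomp, hi, fderiv_inv' hgz, ContinuousLinearMap.comp_apply,
    ContinuousLinearMap.neg_apply, ContinuousLinearMap.mulLeftRight_apply]
  ring

lemma dm_div {f g : ℂ → ℂ} {z : ℂ} (hf : DifferentiableAt ℝ f z) (hg : DifferentiableAt ℝ g z)
    (hgz : g z ≠ 0) :
    dm (fun w => f w / g w) z = (g z * dm f z - f z * dm g z) / (g z * g z) := by
  have h1 : dm (fun w => f w / g w) z = dm (fun w => f w * (g w)⁻¹) z := by
    simp only [div_eq_mul_inv]
  rw [h1, dm_mul hf (hg.fun_inv hgz), dm_inv hg hgz]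
  field_simp
  ring

lemma dm_sum {ι : Type*} (s : Finset ι) (lam : ι → ℂ) (f : ι → ℂ → ℂ) {z : ℂ}
    (hf : ∀ i ∈ s, DifferentiableAt ℝ (f i) z) :
    dm (fun w => ∑ i ∈ s, lam i * f i w) z = ∑ i ∈ s, lam i * dm (f i) z := by
  have hd : ∀ i ∈ s, DifferentiableAt ℝ (fun w => lam i * f i w) z := fun i hi =>
    (hf i hi).const_mul _
  have h := fderiv_fun_sum (𝕜 := ℝ) hd
  have h2 : ∀ i ∈ s, fderiv ℝ (fun w => lam i * f i w) z = lam i • fderiv ℝ (f i) z := fun i hi =>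
    fderiv_const_mul (hf i hi) (lam i)
  have e1 : ∀ v : ℂ, ∑ i ∈ s, (fderiv ℝ (fun w => lam i * f i w) z) v
      = ∑ i ∈ s, lam i * (fderiv ℝ (f i) z) v := fun v =>
    Finset.sum_congr rfl fun i hi => by rw [h2 i hi]; simp
  simp only [dm, h, ContinuousLinearMap.sum_apply, e1]
  rw [Finset.mul_sum, ← Finset.sum_add_distrib, Finset.sum_div]
  exact Finset.sum_congr rfl fun i hi => by ring

section transfer

variable {N : ℕ}

noncomputable abbrev eRP : ℂ ≃L[ℝ] ℝ × ℝ := Complex.equivRealProdCLM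

lemma eRP_one : (eRP : ℂ → ℝ × ℝ) 1 = (1, 0) := by
  simp [Complex.equivRealProdCLM_apply]

lemma eRP_I : (eRP : ℂ → ℝ × ℝ) Complex.I = (0, 1) := by
  simp [Complex.equivRealProdCLM_apply]

lemma eRP_symm_one : (eRP.symm : ℝ × ℝ → ℂ) (1, 0) = 1 := by
  rw [Complex.equivRealProdCLM_symm_apply]; simp

lemma eRP_symm_I : (eRP.symm : ℝ × ℝ → ℂ) (0, 1) = Complex.I := by
  rw [Complex.equivRealProdCLM_symm_apply]; simp

/-- transfer of the d-minus operator from the product side to the complex side -/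
lemma vpdm_eq_dm (x : ℝ × ℝ → Fin N → ℂ) (i : Fin N)
    (hdiff : Differentiable ℝ fun q => x q i) (z : ℂ) :
    vpdm x (eRP z) i = dm (fun w => x (eRP w) i) z := by
  have hc : fderiv ℝ ((fun q => x q i) ∘ (eRP : ℂ → ℝ × ℝ)) z
      = (fderiv ℝ (fun q => x q i) (eRP z)).comp (eRP : ℂ →L[ℝ] ℝ × ℝ) := by
    rw [fderiv_comp z (hdiff (eRP z)) eRP.differentiableAt, eRP.fderiv]
  have hfe : (fun w => x (eRP w) i) = (fun q => x q i) ∘ (eRP : ℂ → ℝ × ℝ) := rfl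
  simp only [dm, hfe, hc, ContinuousLinearMap.comp_apply, ContinuousLinearEquiv.coe_coe, eRP_one,
    eRP_I, vpdm, vpd1, vpd2, Pi.smul_apply, Pi.add_apply, smul_eq_mul]
  ring


end transfer

lemma forward_direction {N : ℕ} (x : ℝ × ℝ → Fin N → ℂ)
    (hdiff : ∀ i, Differentiable ℝ fun q => x q i)
    (hx : ∀ p, x p ≠ 0) (c : ℝ × ℝ → ℂ) (hc : Differentiable ℝ c) (hc0 : ∀ p, c p ≠ 0)
    (hcx : ∀ p, vpdm (fun q => c q • x q) p = 0) :
    ∀ p, ∃ k : ℂ, vpdm x p = k • x p := by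
  intro p
  set A := fderiv ℝ c p (1, 0) with hA
  set B := fderiv ℝ c p (0, 1) with hB
  refine ⟨-((A + Complex.I * B) / 2) / c p, ?_⟩
  funext i
  have hprod : fderiv ℝ (fun q => c q * x q i) p
      = c p • fderiv ℝ (fun q => x q i) p + x p i • fderiv ℝ c p :=
    fderiv_mul (hc p) (hdiff i p)
  have h0 : vpdm (fun q => c q • x q) p i = 0 := by rw [hcx p]; rfl
  have hshow : (fun q => (c q • x q) i) = fun q => c q * x q i := rfl
  simp only [vpdm, vpd1, vpd2, Pi.smul_apply, Pi.add_apply, smul_eq_mul, hshow, hprod,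
    ContinuousLinearMap.add_apply, ContinuousLinearMap.smul_apply] at h0 ⊢
  rw [← hA, ← hB] at h0
  have hcp := hc0 p
  field_simp at h0 ⊢
  ring_nf at h0 ⊢
  linear_combination h0

open Metric

namespace WProd

noncomputable def fac (a : ℂ) (n : ℕ) (z : ℂ) : ℂ :=
  (1 - z / a) * Complex.exp (-(Complex.logTaylor (n + 1) (-(z / a))))

noncomputable def gg (n : ℕ) (w : ℂ) : ℂ :=
  Complex.log (1 - w) - Complex.logTaylor (n + 1) (-w)

lemma one_sub_ne_zero {w : ℂ} (hw : ‖w‖ < 1) : 1 - w ≠ 0 := by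
  intro h
  have : w = 1 := by linear_combination -h
  rw [this] at hw; simp at hw

lemma one_sub_mem_slitPlane {w : ℂ} (hw : ‖w‖ ≤ 1 / 2) : 1 - w ∈ Complex.slitPlane := by
  rw [Complex.mem_slitPlane_iff]
  left
  have h1 : |w.re| ≤ ‖w‖ := Complex.abs_re_le_norm w
  have h2 : (1 - w).re = 1 - w.re := by simp
  rw [h2]
  have : w.re ≤ 1 / 2 := le_trans (le_trans (le_abs_self _) h1) hw
  linarith

lemma gg_bound (n : ℕ) {w : ℂ} (hw : ‖w‖ ≤ 1 / 2) : ‖gg n w‖ ≤ 2 * ‖w‖ ^ (n + 1) := by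
  have hw1 : ‖w‖ < 1 := lt_of_le_of_lt hw (by norm_num)
  have h := Complex.norm_log_sub_logTaylor_le n (z := -w) (by rwa [norm_neg])
  have he : (1 : ℂ) + -w = 1 - w := by ring
  rw [he, norm_neg] at h
  refine le_trans h ?_
  have h1 : (1 - ‖w‖)⁻¹ ≤ 2 := by
    rw [inv_le_comm₀ (by linarith) (by norm_num)]
    linarith
  have hn1 : (1 : ℝ) ≤ (n : ℝ) + 1 := by have := Nat.cast_nonneg (α := ℝ) n; linarith
  calc ‖w‖ ^ (n + 1) * (1 - ‖w‖)⁻¹ / (↑n + 1)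
      ≤ ‖w‖ ^ (n + 1) * 2 / (↑n + 1) := by gcongr
    _ ≤ ‖w‖ ^ (n + 1) * 2 / 1 := by gcongr
    _ = 2 * ‖w‖ ^ (n + 1) := by ring

lemma gg_bound' (n : ℕ) {w : ℂ} (hw : ‖w‖ ≤ 1 / 2) : ‖gg n w‖ ≤ (1 / 2) ^ n := by
  refine le_trans (gg_bound n hw) ?_
  have : ‖w‖ ^ (n + 1) ≤ (1 / 2) ^ (n + 1) := by
    apply pow_le_pow_left₀ (norm_nonneg w) hw
  calc 2 * ‖w‖ ^ (n + 1) ≤ 2 * (1 / 2) ^ (n + 1) := by linarith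
    _ = (1 / 2) ^ n := by ring

lemma fac_eq_exp_gg (a : ℂ) (n : ℕ) {z : ℂ} (hw : ‖z / a‖ < 1) :
    fac a n z = Complex.exp (gg n (z / a)) := by
  have h0 : (1 : ℂ) - z / a ≠ 0 := one_sub_ne_zero hw
  rw [gg, sub_eq_add_neg, Complex.exp_add, Complex.exp_log h0, fac]

lemma fac_differentiable (a : ℂ) (n : ℕ) : Differentiable ℂ (fac a n) := by
  apply Differentiable.mul
  · exact (differentiable_const _).sub (differentiable_id.div_const _)
  · apply Differentiable.cexp
    apply Differentiable.neg
    intro z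
    have h1 : DifferentiableAt ℂ (Complex.logTaylor (n + 1)) (-(z / a)) :=
      (Complex.hasDerivAt_logTaylor n (-(z / a))).differentiableAt
    exact h1.comp (g := Complex.logTaylor (n + 1)) z ((differentiableAt_id.div_const _).neg)

section Seq

variable (a : ℕ → ℂ) (hfin : ∀ R : ℝ, {n | ‖a n‖ < R}.Finite)

noncomputable def NS (R : ℝ) : Finset ℕ := (hfin (2 * R)).toFinset

lemma mem_NS {R : ℝ} {n : ℕ} : n ∈ NS a hfin R ↔ ‖a n‖ < 2 * R := by
  simp [NS, Set.Finite.mem_toFinset]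

noncomputable def tf (R : ℝ) (n : ℕ) (z : ℂ) : ℂ :=
  if n ∈ NS a hfin R then 0 else gg n (z / a n)

noncomputable def tailf (R : ℝ) (z : ℂ) : ℂ := ∑' n, tf a hfin R n z

noncomputable def Wpart (R : ℝ) (z : ℂ) : ℂ :=
  (∏ n ∈ NS a hfin R, fac (a n) n z) * Complex.exp (tailf a hfin R z)

noncomputable def WW (z : ℂ) : ℂ := Wpart a hfin (‖z‖ + 1) z

lemma div_small {R : ℝ} {n : ℕ} {z : ℂ} (hn : n ∉ NS a hfin R) (hz : ‖z‖ < R) :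
    ‖z / a n‖ < 1 / 2 := by
  rw [mem_NS] at hn
  push_neg at hn
  have hR : 0 < R := lt_of_le_of_lt (norm_nonneg z) hz
  have ha : 0 < ‖a n‖ := lt_of_lt_of_le (by linarith) hn
  rw [norm_div, div_lt_iff₀ ha]
  nlinarith

lemma tf_norm_le {R : ℝ} {z : ℂ} (hz : ‖z‖ < R) (n : ℕ) :
    ‖tf a hfin R n z‖ ≤ (1 / 2 : ℝ) ^ n := by
  by_cases hn : n ∈ NS a hfin R
  · simp [tf, hn]
  · rw [tf, if_neg hn]
    exact gg_bound' n (le_of_lt (div_small a hfin hn hz))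

lemma summable_half : Summable (fun n : ℕ => (1 / 2 : ℝ) ^ n) :=
  summable_geometric_of_lt_one (by norm_num) (by norm_num)

lemma tf_summable {R : ℝ} {z : ℂ} (hz : ‖z‖ < R) :
    Summable (fun n => tf a hfin R n z) :=
  Summable.of_norm_bounded (summable_half) (tf_norm_le a hfin hz)

lemma Wpart_mono {R₁ R₂ : ℝ} (hle : R₁ ≤ R₂) {z : ℂ} (hz : ‖z‖ < R₁) :
    Wpart a hfin R₁ z = Wpart a hfin R₂ z := by
  classical
  have hz₂ : ‖z‖ < R₂ := lt_of_lt_of_le hz hle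
  have hsub : NS a hfin R₁ ⊆ NS a hfin R₂ := by
    intro n hn
    rw [mem_NS] at hn ⊢
    linarith
  have hdiffterm : ∀ n, tf a hfin R₁ n z - tf a hfin R₂ n z
      = if n ∈ NS a hfin R₂ \ NS a hfin R₁ then gg n (z / a n) else 0 := by
    intro n
    by_cases h1 : n ∈ NS a hfin R₁
    · have h2 : n ∈ NS a hfin R₂ := hsub h1
      simp [tf, h1, h2, Finset.mem_sdiff]
    · by_cases h2 : n ∈ NS a hfin R₂
      · simp [tf, h1, h2, Finset.mem_sdiff]
      · simp [tf, h1, h2, Finset.mem_sdiff]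
  have htail : tailf a hfin R₁ z = tailf a hfin R₂ z
      + ∑ n ∈ NS a hfin R₂ \ NS a hfin R₁, gg n (z / a n) := by
    have hs₁ := tf_summable a hfin (R := R₁) (z := z) hz
    have hs₂ := tf_summable a hfin (R := R₂) (z := z) hz₂
    have hsub' : ∑' n, (tf a hfin R₁ n z - tf a hfin R₂ n z)
        = tailf a hfin R₁ z - tailf a hfin R₂ z := Summable.tsum_sub hs₁ hs₂
    have hsum : ∑' n, (tf a hfin R₁ n z - tf a hfin R₂ n z)
        = ∑ n ∈ NS a hfin R₂ \ NS a hfin R₁, gg n (z / a n) := by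
      have h1 : ∑' n, (tf a hfin R₁ n z - tf a hfin R₂ n z)
          = ∑ n ∈ NS a hfin R₂ \ NS a hfin R₁,
              (tf a hfin R₁ n z - tf a hfin R₂ n z) := by
        apply tsum_eq_sum
        intro b hb
        rw [hdiffterm b, if_neg hb]
      rw [h1]
      apply Finset.sum_congr rfl
      intro n hn
      rw [hdiffterm n, if_pos hn]
    rw [hsum] at hsub'
    linear_combination -hsub'
  rw [Wpart, Wpart, htail, Complex.exp_add]
  have hprodeq : Complex.exp (∑ n ∈ NS a hfin R₂ \ NS a hfin R₁, gg n (z / a n))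
      = ∏ n ∈ NS a hfin R₂ \ NS a hfin R₁, fac (a n) n z := by
    rw [Complex.exp_sum]
    refine Finset.prod_congr rfl fun n hn => ?_
    have hn1 : n ∉ NS a hfin R₁ := (Finset.mem_sdiff.mp hn).2
    exact (fac_eq_exp_gg (a n) n (lt_trans (div_small a hfin hn1 hz) (by norm_num))).symm
  rw [hprodeq, ← Finset.prod_sdiff hsub]
  ring

lemma WW_eq {R : ℝ} {z : ℂ} (hz : ‖z‖ < R) : WW a hfin z = Wpart a hfin R z := by
  have h1 : ‖z‖ < ‖z‖ + 1 := by linarith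
  rcases le_total (‖z‖ + 1) R with h | h
  · exact Wpart_mono a hfin h h1
  · exact (Wpart_mono a hfin h hz).symm

lemma tailf_diffOn (R : ℝ) : DifferentiableOn ℂ (tailf a hfin R) (ball (0 : ℂ) R) := by
  have hball : ∀ z : ℂ, z ∈ ball (0 : ℂ) R → ‖z‖ < R := by
    intro z hz; simpa [mem_ball, dist_eq_norm] using hz
  apply differentiableOn_tsum_of_summable_norm (summable_half)
    (fun n => ?_) isOpen_ball (fun n w hw => tf_norm_le a hfin (hball w hw) n)
  by_cases hn : n ∈ NS a hfin R
  · have h0 : tf a hfin R n = fun _ => (0 : ℂ) := by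
      funext z; rw [tf, if_pos hn]
    rw [h0]
    exact differentiableOn_const 0
  · have h0 : tf a hfin R n = fun z => gg n (z / a n) := by
      funext z; rw [tf, if_neg hn]
    rw [h0]
    intro z hz
    have hsmall : ‖z / a n‖ < 1 / 2 := div_small a hfin hn (hball z hz)
    have hlog : DifferentiableAt ℂ (fun w : ℂ => Complex.log (1 - w / a n)) z := by
      have hin : (1 : ℂ) - z / a n ∈ Complex.slitPlane :=
        one_sub_mem_slitPlane (le_of_lt hsmall)
      have hinner : DifferentiableAt ℂ (fun w : ℂ => 1 - w / a n) z :=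
        (differentiableAt_const _).sub (differentiableAt_id.div_const _)
      exact (Complex.differentiableAt_log hin).comp z hinner
    have hLT : DifferentiableAt ℂ (fun w : ℂ => Complex.logTaylor (n + 1) (-(w / a n))) z := by
      have h1 : DifferentiableAt ℂ (Complex.logTaylor (n + 1)) (-(z / a n)) :=
        (Complex.hasDerivAt_logTaylor n (-(z / a n))).differentiableAt
      exact h1.comp (g := Complex.logTaylor (n + 1)) z ((differentiableAt_id.div_const _).neg)
    exact ((hlog.sub hLT).differentiableWithinAt)

lemma Wpart_diffOn (R : ℝ) : DifferentiableOn ℂ (Wpart a hfin R) (ball (0 : ℂ) R) := by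
  apply DifferentiableOn.mul
  · apply DifferentiableOn.fun_finsetProd
    intro n _
    exact (fac_differentiable (a n) n).differentiableOn
  · exact (tailf_diffOn a hfin R).cexp

lemma WW_diff : Differentiable ℂ (WW a hfin) := by
  intro z₀
  set R := ‖z₀‖ + 1 with hR
  have hz₀ : z₀ ∈ ball (0 : ℂ) R := by
    simp [mem_ball, dist_eq_norm, hR]
  have hev : WW a hfin =ᶠ[nhds z₀] Wpart a hfin R := by
    filter_upwards [isOpen_ball.mem_nhds hz₀] with z hz
    exact WW_eq a hfin (by simpa [mem_ball, dist_eq_norm] using hz)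
  rw [hev.differentiableAt_iff]
  exact (Wpart_diffOn a hfin R).differentiableAt (isOpen_ball.mem_nhds hz₀)

lemma WW_factor (ha0 : ∀ n, a n ≠ 0) (z₀ : ℂ) :
    ∃ A : ℂ → ℂ, AnalyticAt ℂ A z₀ ∧ A z₀ ≠ 0 ∧
      ∀ᶠ z in nhds z₀, WW a hfin z = (z - z₀) ^ ({n | a n = z₀}.ncard) * A z := by
  classical
  set R := ‖z₀‖ + 1 with hR
  set K := (NS a hfin R).filter (fun n => a n = z₀) with hK
  have hKiff : ∀ n, a n = z₀ ↔ n ∈ K := by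
    intro n
    constructor
    · intro h
      rw [hK, Finset.mem_filter, mem_NS]
      refine ⟨?_, h⟩
      rw [h, hR]
      have := norm_nonneg z₀
      linarith
    · intro h
      exact (Finset.mem_filter.mp h).2
  have hset : {n | a n = z₀} = (K : Set ℕ) := by
    ext n; simp [hKiff n]
  have hcard : {n | a n = z₀}.ncard = K.card := by
    rw [hset, Set.ncard_coe_finset]
  set A : ℂ → ℂ := fun z =>
    (∏ n ∈ K, (-(a n)⁻¹ * Complex.exp (-(Complex.logTaylor (n + 1) (-(z / a n)))))) *
      ((∏ n ∈ NS a hfin R \ K, fac (a n) n z) * Complex.exp (tailf a hfin R z)) with hA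
  have hz₀mem : z₀ ∈ ball (0 : ℂ) R := by simp [mem_ball, dist_eq_norm, hR]
  refine ⟨A, ?_, ?_, ?_⟩
  · -- analytic
    apply DifferentiableOn.analyticAt (s := ball (0 : ℂ) R) ?_ (isOpen_ball.mem_nhds hz₀mem)
    apply DifferentiableOn.mul
    · apply DifferentiableOn.fun_finsetProd
      intro n _
      apply DifferentiableOn.const_mul
      apply DifferentiableOn.cexp
      apply DifferentiableOn.neg
      intro z _
      have h1 : DifferentiableAt ℂ (Complex.logTaylor (n + 1)) (-(z / a n)) :=
        (Complex.hasDerivAt_logTaylor n (-(z / a n))).differentiableAt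
      exact (h1.comp (g := Complex.logTaylor (n + 1)) z ((differentiableAt_id.div_const _).neg)).differentiableWithinAt
    · apply DifferentiableOn.mul
      · apply DifferentiableOn.fun_finsetProd
        intro n _
        exact (fac_differentiable (a n) n).differentiableOn
      · exact (tailf_diffOn a hfin R).cexp
  · -- nonzero at z₀
    rw [hA]
    apply mul_ne_zero
    · rw [Finset.prod_ne_zero_iff]
      intro n _
      exact mul_ne_zero (neg_ne_zero.mpr (inv_ne_zero (ha0 n))) (Complex.exp_ne_zero _)
    · apply mul_ne_zero
      · rw [Finset.prod_ne_zero_iff]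
        intro n hn
        have hnK : n ∉ K := (Finset.mem_sdiff.mp hn).2
        have hne : a n ≠ z₀ := fun h => hnK ((hKiff n).mp h)
        apply mul_ne_zero ?_ (Complex.exp_ne_zero _)
        intro h
        apply hne
        have han := ha0 n
        field_simp at h
        linear_combination h
      · exact Complex.exp_ne_zero _
  · -- eventual factorization
    filter_upwards [isOpen_ball.mem_nhds hz₀mem] with z hz
    have hzR : ‖z‖ < R := by simpa [mem_ball, dist_eq_norm] using hz
    rw [WW_eq a hfin hzR, Wpart]
    have hsplit : ∏ n ∈ NS a hfin R, fac (a n) n z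
        = (∏ n ∈ NS a hfin R \ K, fac (a n) n z) * ∏ n ∈ K, fac (a n) n z :=
      (Finset.prod_sdiff (Finset.filter_subset _ _)).symm
    have hKfac : ∀ n ∈ K, fac (a n) n z
        = (z - z₀) * (-(a n)⁻¹ * Complex.exp (-(Complex.logTaylor (n + 1) (-(z / a n))))) := by
      intro n hn
      have han : a n = z₀ := (Finset.mem_filter.mp hn).2
      rw [fac]
      have ha' := ha0 n
      field_simp
      rw [han]
      ring
    have hKprod : ∏ n ∈ K, fac (a n) n z
        = (z - z₀) ^ K.card *
          ∏ n ∈ K, (-(a n)⁻¹ * Complex.exp (-(Complex.logTaylor (n + 1) (-(z / a n))))) := by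
      rw [Finset.prod_congr rfl hKfac, Finset.prod_mul_distrib, Finset.prod_const]
    rw [hsplit, hKprod, hcard, hA]
    ring

end Seq

end WProd

theorem weierstrass_exists (Z : Set ℂ) (hZc : IsClosed Z)
    (hZd : ∀ z ∈ Z, ∀ᶠ w in nhdsWithin z {z}ᶜ, w ∉ Z)
    (m : ℂ → ℕ) (hm : ∀ z ∈ Z, 1 ≤ m z) (hm0 : ∀ z ∉ Z, m z = 0) :
    ∃ W : ℂ → ℂ, Differentiable ℂ W ∧ ∀ z₀ : ℂ,
      ∃ A : ℂ → ℂ, AnalyticAt ℂ A z₀ ∧ A z₀ ≠ 0 ∧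
        ∀ᶠ z in nhds z₀, W z = (z - z₀) ^ (m z₀) * A z := by
  classical
  have hZball : ∀ R : ℝ, (Z ∩ closedBall 0 R).Finite := by
    intro R
    have hdisc : DiscreteTopology ↥(Z ∩ closedBall (0 : ℂ) R) := by
      rw [discreteTopology_subtype_iff]
      intro z hz
      rw [inf_principal_eq_bot]
      filter_upwards [hZd z hz.1] with w hw
      intro hw2
      exact hw hw2.1
    have hcomp : IsCompact (Z ∩ closedBall (0 : ℂ) R) :=
      (isCompact_closedBall 0 R).of_isClosed_subset (hZc.inter Metric.isClosed_closedBall)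
        inter_subset_right
    exact hcomp.finite (isDiscrete_iff_discreteTopology.mpr hdisc)
  by_cases hZfin : Z.Finite
  · -- finite case : polynomial
    refine ⟨fun z => ∏ p ∈ hZfin.toFinset, (z - p) ^ m p, ?_, ?_⟩
    · apply Differentiable.fun_finsetProd
      intro p _
      exact (differentiable_id.sub_const p).pow _
    · intro z₀
      by_cases hz₀ : z₀ ∈ Z
      · refine ⟨fun z => ∏ p ∈ hZfin.toFinset.erase z₀, (z - p) ^ m p, ?_, ?_, ?_⟩
        · apply Differentiable.analyticAt
          apply Differentiable.fun_finsetProd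
          intro p _
          exact (differentiable_id.sub_const p).pow _
        · rw [Finset.prod_ne_zero_iff]
          intro p hp
          have hne : z₀ ≠ p := fun h => (Finset.mem_erase.mp hp).1 h.symm
          exact pow_ne_zero _ (sub_ne_zero.mpr hne)
        · apply Filter.Eventually.of_forall
          intro z
          show ∏ p ∈ hZfin.toFinset, (z - p) ^ m p
            = (z - z₀) ^ m z₀ * ∏ p ∈ hZfin.toFinset.erase z₀, (z - p) ^ m p
          rw [← Finset.mul_prod_erase _ _ (hZfin.mem_toFinset.mpr hz₀)]
      · refine ⟨fun z => ∏ p ∈ hZfin.toFinset, (z - p) ^ m p, ?_, ?_, ?_⟩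
        · apply Differentiable.analyticAt
          apply Differentiable.fun_finsetProd
          intro p _
          exact (differentiable_id.sub_const p).pow _
        · rw [Finset.prod_ne_zero_iff]
          intro p hp
          have hne : z₀ ≠ p := fun h => hz₀ (h ▸ hZfin.mem_toFinset.mp hp)
          exact pow_ne_zero _ (sub_ne_zero.mpr hne)
        · apply Filter.Eventually.of_forall
          intro z
          show ∏ p ∈ hZfin.toFinset, (z - p) ^ m p
            = (z - z₀) ^ m z₀ * ∏ p ∈ hZfin.toFinset, (z - p) ^ m p
          rw [hm0 z₀ hz₀, pow_zero, one_mul]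
  · -- infinite case
    have hZcount : Z.Countable := by
      have hZU : Z = ⋃ n : ℕ, Z ∩ closedBall 0 n := by
        ext z
        simp only [mem_iUnion, mem_inter_iff, mem_closedBall, dist_zero_right]
        constructor
        · intro hz
          obtain ⟨n, hn⟩ := exists_nat_ge ‖z‖
          exact ⟨n, hz, hn⟩
        · rintro ⟨n, hz, _⟩; exact hz
      rw [hZU]
      exact countable_iUnion fun n => (hZball n).countable
    have hZne : Z ≠ univ := by
      intro h
      obtain ⟨w, hw⟩ := (hZd 0 (by rw [h]; trivial)).exists
      exact hw (by rw [h]; trivial)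
    obtain ⟨w₀, hw₀⟩ := (Set.ne_univ_iff_exists_notMem Z).mp hZne
    set P : Set (ℂ × ℕ) := {q | q.1 ∈ Z ∧ q.2 < m q.1} with hP
    have hPc : P.Countable := by
      have : P ⊆ Z ×ˢ (univ : Set ℕ) := fun q hq => ⟨hq.1, trivial⟩
      exact (hZcount.prod countable_univ).mono this
    haveI hPcount : Countable ↥P := hPc.to_subtype
    haveI hPinf : Infinite ↥P := by
      have hinj : Function.Injective (fun z : ↥Z => (⟨(z.1, 0), ⟨z.2, hm z.1 z.2⟩⟩ : ↥P)) := by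
        intro z₁ z₂ h
        apply Subtype.ext
        have := congrArg (fun q : ↥P => (q : ℂ × ℕ).1) h
        exact this
      haveI := Set.Infinite.to_subtype hZfin
      exact Infinite.of_injective _ hinj
    letI : Encodable ↥P := (nonempty_encodable ↥P).some
    letI : Denumerable ↥P := Denumerable.ofEncodableOfInfinite ↥P
    set E : ↥P ≃ ℕ := Denumerable.eqv ↥P with hE
    set a0 : ℕ → ℂ := fun n => ((E.symm n : ↥P) : ℂ × ℕ).1 with ha0def
    have ha0Z : ∀ n, a0 n ∈ Z := fun n => (E.symm n).2.1
    have hbij : ∀ p ∈ Z, Set.BijOn (fun n => ((E.symm n : ↥P) : ℂ × ℕ).2)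
        {n | a0 n = p} (Set.Iio (m p)) := by
      intro p hp
      refine ⟨?_, ?_, ?_⟩
      · intro n hn
        have h2 := (E.symm n).2.2
        rw [mem_setOf_eq] at hn
        rw [Set.mem_Iio, ← hn]
        exact h2
      · intro n₁ hn₁ n₂ hn₂ h
        have : (E.symm n₁ : ℂ × ℕ) = (E.symm n₂ : ℂ × ℕ) := by
          apply Prod.ext
          · rw [mem_setOf_eq] at hn₁ hn₂
            show a0 n₁ = a0 n₂
            rw [hn₁, hn₂]
          · exact h
        have h2 : E.symm n₁ = E.symm n₂ := Subtype.ext this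
        exact E.symm.injective h2
      · intro j hj
        rw [Set.mem_Iio] at hj
        refine ⟨E ⟨(p, j), ⟨hp, hj⟩⟩, ?_, ?_⟩
        · rw [mem_setOf_eq, ha0def]
          simp
        · simp
    have hfibercard : ∀ p ∈ Z, {n | a0 n = p}.ncard = m p := by
      intro p hp
      have h1 := (hbij p hp).2.1
      have h2 := (hbij p hp).image_eq
      rw [← Set.ncard_image_of_injOn h1, h2, ← Finset.coe_range, Set.ncard_coe_finset,
        Finset.card_range]
    have hfiberfin : ∀ p, {n | a0 n = p}.Finite := by
      intro p
      by_cases hp : p ∈ Z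
      · exact Set.Finite.of_finite_image ((hbij p hp).image_eq ▸ Set.finite_Iio _)
          (hbij p hp).2.1
      · have : {n | a0 n = p} = ∅ := by
          ext n; simp only [mem_setOf_eq, mem_empty_iff_false, iff_false]
          intro h; exact hp (h ▸ ha0Z n)
        rw [this]; exact finite_empty
    have hfin0 : ∀ R : ℝ, {n | ‖a0 n‖ < R}.Finite := by
      intro R
      have hsub : {n | ‖a0 n‖ < R} ⊆ ⋃ p ∈ Z ∩ closedBall 0 R, {n | a0 n = p} := by
        intro n hn
        rw [mem_setOf_eq] at hn
        apply Set.mem_biUnion (show a0 n ∈ Z ∩ closedBall 0 R from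
          ⟨ha0Z n, by rw [mem_closedBall, dist_zero_right]; exact le_of_lt hn⟩)
        rfl
      exact ((hZball R).biUnion fun p _ => hfiberfin p).subset hsub
    set a1 : ℕ → ℂ := fun n => a0 n - w₀ with ha1def
    have ha1 : ∀ n, a1 n ≠ 0 := by
      intro n
      rw [ha1def]
      simp only [sub_ne_zero]
      intro h
      exact hw₀ (h ▸ ha0Z n)
    have hfin1 : ∀ R : ℝ, {n | ‖a1 n‖ < R}.Finite := by
      intro R
      apply (hfin0 (R + ‖w₀‖)).subset
      intro n hn
      rw [mem_setOf_eq] at hn ⊢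
      calc ‖a0 n‖ = ‖a1 n + w₀‖ := by rw [ha1def]; ring_nf
        _ ≤ ‖a1 n‖ + ‖w₀‖ := norm_add_le _ _
        _ < R + ‖w₀‖ := by linarith
    refine ⟨fun z => WProd.WW a1 hfin1 (z - w₀), ?_, ?_⟩
    · exact (WProd.WW_diff a1 hfin1).comp (differentiable_id.sub_const w₀)
    · intro z₀
      obtain ⟨A, hA, hA0, hev⟩ := WProd.WW_factor a1 hfin1 ha1 (z₀ - w₀)
      have hsets : {n | a1 n = z₀ - w₀} = {n | a0 n = z₀} := by
        ext n
        rw [mem_setOf_eq, mem_setOf_eq, ha1def]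
        constructor
        · intro h; linear_combination h
        · intro h; show a0 n - w₀ = z₀ - w₀; rw [h]
      have hd : {n | a1 n = z₀ - w₀}.ncard = m z₀ := by
        rw [hsets]
        by_cases hz₀ : z₀ ∈ Z
        · exact hfibercard z₀ hz₀
        · rw [hm0 z₀ hz₀]
          have : {n | a0 n = z₀} = ∅ := by
            ext n; simp only [mem_setOf_eq, mem_empty_iff_false, iff_false]
            intro h; exact hz₀ (h ▸ ha0Z n)
          rw [this, Set.ncard_empty]
      refine ⟨fun z => A (z - w₀), ?_, hA0, ?_⟩
      · have hin : AnalyticAt ℂ (fun z : ℂ => z - w₀) z₀ := analyticAt_id.sub analyticAt_const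
        show AnalyticAt ℂ (A ∘ fun z : ℂ => z - w₀) z₀
        exact AnalyticAt.comp (x := z₀) hA hin
      · have htend : Filter.Tendsto (fun z : ℂ => z - w₀) (nhds z₀) (nhds (z₀ - w₀)) :=
          ((continuous_id.sub continuous_const).tendsto z₀)
        filter_upwards [htend.eventually hev] with z hz
        rw [hd] at hz
        convert hz using 2
        ring

theorem reverse_direction {N : ℕ} (x : ℝ × ℝ → Fin N → ℂ)
    (hdiff : ∀ i, Differentiable ℝ fun q => x q i)
    (hx : ∀ p, x p ≠ 0)
    (hyp : ∀ p, ∃ k : ℂ, vpdm x p = k • x p) :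
    ∃ c : ℝ × ℝ → ℂ, Differentiable ℝ c ∧ (∀ p, c p ≠ 0) ∧
      ∀ p, vpdm (fun q => c q • x q) p = 0 := by
  classical
  set X : Fin N → ℂ → ℂ := fun i z => x (eRP z) i with hXdef
  have hXdiff : ∀ i, Differentiable ℝ (X i) := by
    intro i z
    exact ((hdiff i) (eRP z)).comp z eRP.differentiableAt
  set k' : ℂ → ℂ := fun z => Classical.choose (hyp (eRP z)) with hk'def
  have hk' : ∀ z i, dm (X i) z = k' z * X i z := by
    intro z i
    have hs := Classical.choose_spec (hyp (eRP z))
    have h2 := congrFun hs i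
    rw [show dm (X i) z = vpdm x (eRP z) i from (vpdm_eq_dm x i (hdiff i) z).symm]
    exact h2
  have hXne : ∀ z, ∃ i, X i z ≠ 0 := by
    intro z
    have h := hx (eRP z)
    rw [Function.ne_iff] at h
    exact h
  have hXcont : ∀ i, Continuous (X i) := fun i => (hXdiff i).continuous
  have ratioAnalytic : ∀ (f : ℂ → ℂ), Differentiable ℝ f → (∀ z, dm f z = k' z * f z) →
      ∀ (j : Fin N) (z : ℂ), X j z ≠ 0 → AnalyticAt ℂ (fun w => f w / X j w) z := by
    intro f hf hfk j z hz
    have hUopen : IsOpen {w | X j w ≠ 0} := by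
      have : {w | X j w ≠ 0} = X j ⁻¹' ({0}ᶜ) := rfl
      rw [this]
      exact (hXcont j).isOpen_preimage _ isOpen_compl_singleton
    have hUdiff : DifferentiableOn ℂ (fun w => f w / X j w) {w | X j w ≠ 0} := by
      intro w hw
      have hw' : X j w ≠ 0 := hw
      have hR : DifferentiableAt ℝ (fun u => f u / X j u) w := by
        have h := (hf w).fun_mul ((hXdiff j w).fun_inv hw')
        simpa [div_eq_mul_inv] using h
      have hdm : dm (fun u => f u / X j u) w = 0 := by
        rw [dm_div (hf w) (hXdiff j w) hw', hfk w, hk' w j]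
        have hz0 : X j w * (k' w * f w) - f w * (k' w * X j w) = 0 := by ring
        rw [hz0, zero_div]
      exact (cdiff_of_dm hR hdm).differentiableWithinAt
    exact hUdiff.analyticAt (hUopen.mem_nhds hz)
  -- generic linear combination via Baire
  set Sfun : (Fin N → ℂ) → ℂ → ℂ := fun lam z => ∑ i, lam i * X i z with hSfun
  have hSconts : ∀ z, Continuous (fun lam : Fin N → ℂ => Sfun lam z) := by
    intro z
    apply continuous_finset_sum
    intro i _
    exact (continuous_apply i).mul continuous_const
  set ι := {q : ℚ × ℚ × ℚ // 0 < q.2.2} with hι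
  set ctr : ι → ℂ := fun q => ⟨(q.1.1 : ℝ), (q.1.2.1 : ℝ)⟩ with hctr
  set rad : ι → ℝ := fun q => ((q : ℚ × ℚ × ℚ).2.2 : ℝ) with hrad
  have hradpos : ∀ q : ι, 0 < rad q := fun q => by
    show (0:ℝ) < ((q : ℚ × ℚ × ℚ).2.2 : ℝ)
    exact_mod_cast q.2
  set Lam : ι → Submodule ℂ (Fin N → ℂ) := fun q =>
    { carrier := {lam | ∀ z ∈ ball (ctr q) (rad q), Sfun lam z = 0}
      add_mem' := by
        intro a b ha hb z hz
        have h1 : Sfun (a + b) z = Sfun a z + Sfun b z := by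
          simp only [hSfun, Pi.add_apply, add_mul]
          rw [Finset.sum_add_distrib]
        rw [h1, ha z hz, hb z hz, add_zero]
      zero_mem' := by
        intro z hz
        simp [hSfun]
      smul_mem' := by
        intro t a ha z hz
        have h1 : Sfun (t • a) z = t * Sfun a z := by
          simp only [hSfun, Pi.smul_apply, smul_eq_mul, Finset.mul_sum]
          exact Finset.sum_congr rfl fun i _ => by ring
        rw [h1, ha z hz, mul_zero] } with hLam
  have hLmem : ∀ (q : ι) (lam : Fin N → ℂ),
      lam ∈ Lam q ↔ ∀ z ∈ ball (ctr q) (rad q), Sfun lam z = 0 := by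
    intro q lam
    rw [hLam]
    rfl
  have hLclosed : ∀ q, IsClosed ((Lam q : Set (Fin N → ℂ))) := by
    intro q
    have h1 : ((Lam q : Set (Fin N → ℂ)))
        = ⋂ z ∈ ball (ctr q) (rad q), {lam | Sfun lam z = 0} := by
      ext lam
      simp only [mem_iInter, mem_setOf_eq, SetLike.mem_coe, hLmem]
    rw [h1]
    exact isClosed_biInter fun z _ => isClosed_eq (hSconts z) continuous_const
  have hLne : ∀ q, Lam q ≠ ⊤ := by
    intro q htop
    set lam₀ : Fin N → ℂ := fun i => starRingEnd ℂ (X i (ctr q)) with hlam₀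
    have hmem : lam₀ ∈ Lam q := by rw [htop]; trivial
    have h0 : Sfun lam₀ (ctr q) = 0 :=
      (hLmem q lam₀).mp hmem (ctr q) (mem_ball_self (hradpos q))
    have h1 : Sfun lam₀ (ctr q) = ((∑ i, Complex.normSq (X i (ctr q)) : ℝ) : ℂ) := by
      rw [hSfun, Complex.ofReal_sum]
      exact Finset.sum_congr rfl fun i _ => by
        rw [hlam₀, mul_comm, Complex.mul_conj]
    obtain ⟨i₀, hi₀⟩ := hXne (ctr q)
    have h2 : 0 < ∑ i, Complex.normSq (X i (ctr q)) :=
      Finset.sum_pos' (fun i _ => Complex.normSq_nonneg _)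
        ⟨i₀, Finset.mem_univ _, Complex.normSq_pos.mpr hi₀⟩
    rw [h1] at h0
    rw [Complex.ofReal_eq_zero] at h0
    linarith
  have hLint : ∀ q, interior ((Lam q : Set (Fin N → ℂ))) = ∅ := by
    intro q
    by_contra h
    exact hLne q (Submodule.eq_top_of_nonempty_interior' _ (nonempty_iff_ne_empty.mpr h))
  have hdense : Dense (⋂ q : ι, ((Lam q : Set (Fin N → ℂ))ᶜ)) :=
    dense_iInter_of_isOpen (fun q => (hLclosed q).isOpen_compl)
      (fun q => interior_eq_empty_iff_dense_compl.mp (hLint q))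
  obtain ⟨lam, hlam⟩ := hdense.nonempty
  rw [mem_iInter] at hlam
  have hgen : ∀ z₀ : ℂ, ¬ (∀ᶠ z in nhds z₀, Sfun lam z = 0) := by
    intro z₀ hev
    obtain ⟨ε, hε, hball⟩ := Metric.mem_nhds_iff.mp hev
    obtain ⟨q₁, hq₁⟩ := exists_rat_near z₀.re (show (0:ℝ) < ε/8 by linarith)
    obtain ⟨q₂, hq₂⟩ := exists_rat_near z₀.im (show (0:ℝ) < ε/8 by linarith)
    obtain ⟨r, hr₁, hr₂⟩ := exists_rat_btwn (show ε/4 < ε/2 by linarith)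
    have hrpos : (0:ℝ) < (r:ℝ) := by linarith
    set q : ι := ⟨(q₁, q₂, r), by exact_mod_cast hrpos⟩ with hq
    have hradq : rad q = (r : ℝ) := rfl
    have hre : (z₀ - ctr q).re = z₀.re - (q₁ : ℝ) := by rw [Complex.sub_re]
    have him : (z₀ - ctr q).im = z₀.im - (q₂ : ℝ) := by rw [Complex.sub_im]
    have hdist : dist z₀ (ctr q) < ε/4 := by
      rw [Complex.dist_eq]
      calc ‖z₀ - ctr q‖ ≤ |(z₀ - ctr q).re| + |(z₀ - ctr q).im| :=
            Complex.norm_le_abs_re_add_abs_im _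
        _ < ε/4 := by rw [hre, him]; rw [abs_sub_comm z₀.re, abs_sub_comm z₀.im] at *; linarith
    apply hlam q
    rw [SetLike.mem_coe, hLmem]
    intro z hz
    apply hball
    rw [mem_ball] at hz ⊢
    rw [hradq] at hz
    have h3 : dist z z₀ ≤ dist z (ctr q) + dist (ctr q) z₀ := dist_triangle _ _ _
    rw [dist_comm (ctr q) z₀] at h3
    linarith
  -- the generic section S
  set S : ℂ → ℂ := fun z => Sfun lam z with hS
  have hSdiff : Differentiable ℝ S := by
    intro z
    exact DifferentiableAt.fun_sum (fun i _ => ((hXdiff i) z).const_mul (lam i))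
  have hSdm : ∀ z, dm S z = k' z * S z := by
    intro z
    have h1 := dm_sum Finset.univ lam X (fun i _ => (hXdiff i) z)
    rw [hS]
    show dm (fun w => ∑ i, lam i * X i w) z = k' z * ∑ i, lam i * X i z
    rw [h1, Finset.mul_sum]
    exact Finset.sum_congr rfl fun i _ => by rw [hk' z i]; ring
  have hScont : Continuous S := hSdiff.continuous
  set Z : Set ℂ := {z | S z = 0} with hZdef
  have hZc : IsClosed Z := isClosed_eq hScont continuous_const
  set J : ℂ → Fin N := fun z => (hXne z).choose with hJ
  have hJne : ∀ z, X (J z) z ≠ 0 := fun z => (hXne z).choose_spec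
  set Hf : ℂ → ℂ → ℂ := fun z₀ w => S w / X (J z₀) w with hHf
  have hHan : ∀ z₀, AnalyticAt ℂ (Hf z₀) z₀ := fun z₀ =>
    ratioAnalytic S hSdiff hSdm (J z₀) z₀ (hJne z₀)
  have hHnot0 : ∀ z₀, ¬ (∀ᶠ w in nhds z₀, Hf z₀ w = 0) := by
    intro z₀ hev
    apply hgen z₀
    have hXev : ∀ᶠ w in nhds z₀, X (J z₀) w ≠ 0 :=
      ((hXcont (J z₀)).continuousAt).eventually_ne (hJne z₀)
    filter_upwards [hev, hXev] with w h1 h2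
    have h3 : S w = Hf z₀ w * X (J z₀) w := (div_mul_cancel₀ _ h2).symm
    show S w = 0
    rw [h3, h1, zero_mul]
  have hordfin : ∀ z₀, analyticOrderAt (Hf z₀) z₀ ≠ ⊤ := fun z₀ h =>
    hHnot0 z₀ (analyticOrderAt_eq_top.mp h)
  set dOf : ℂ → ℕ := fun z₀ => (analyticOrderAt (Hf z₀) z₀).toNat with hdOf
  have hfact : ∀ z₀, ∃ B : ℂ → ℂ, AnalyticAt ℂ B z₀ ∧ B z₀ ≠ 0 ∧
      ∀ᶠ w in nhds z₀, Hf z₀ w = (w - z₀) ^ (dOf z₀) * B w := by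
    intro z₀
    have h1 : analyticOrderAt (Hf z₀) z₀ = (dOf z₀ : ℕ∞) := (ENat.coe_toNat (hordfin z₀)).symm
    obtain ⟨B, hB1, hB2, hB3⟩ := ((hHan z₀).analyticOrderAt_eq_natCast).mp h1
    refine ⟨B, hB1, hB2, ?_⟩
    filter_upwards [hB3] with w hw
    rw [hw, smul_eq_mul]
  have hm : ∀ z₀ ∈ Z, 1 ≤ dOf z₀ := by
    intro z₀ hz₀
    by_contra h
    push_neg at h
    have h0 : dOf z₀ = 0 := Nat.lt_one_iff.mp h
    obtain ⟨B, hB1, hB2, hB3⟩ := hfact z₀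
    have h2 := hB3.self_of_nhds
    rw [h0, pow_zero, one_mul] at h2
    have h3 : Hf z₀ z₀ = 0 := by
      have hz₀' : S z₀ = 0 := hz₀
      show S z₀ / X (J z₀) z₀ = 0
      rw [hz₀', zero_div]
    exact hB2 (h2 ▸ h3)
  have hm0 : ∀ z₀ ∉ Z, dOf z₀ = 0 := by
    intro z₀ hz₀
    by_contra h
    obtain ⟨B, hB1, hB2, hB3⟩ := hfact z₀
    have h2 := hB3.self_of_nhds
    have h4 : (z₀ - z₀ : ℂ) ^ dOf z₀ = 0 := by
      rw [sub_self]
      exact zero_pow h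
    rw [h4, zero_mul] at h2
    have h5 : S z₀ / X (J z₀) z₀ = 0 := h2
    rw [div_eq_zero_iff] at h5
    rcases h5 with h5 | h5
    · exact hz₀ h5
    · exact hJne z₀ h5
  have hZd : ∀ z₀ ∈ Z, ∀ᶠ w in nhdsWithin z₀ {z₀}ᶜ, w ∉ Z := by
    intro z₀ hz₀
    rcases (hHan z₀).eventually_eq_zero_or_eventually_ne_zero with hc | hc
    · exact absurd hc (hHnot0 z₀)
    · have hXev : ∀ᶠ w in nhdsWithin z₀ {z₀}ᶜ, X (J z₀) w ≠ 0 :=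
        mem_nhdsWithin_of_mem_nhds (((hXcont (J z₀)).continuousAt).eventually_ne (hJne z₀))
      filter_upwards [hc, hXev] with w h1 h2
      intro hw
      apply h1
      have hw' : S w = 0 := hw
      show S w / X (J z₀) w = 0
      rw [hw', zero_div]
  obtain ⟨W, hWdiff, hWfact⟩ := weierstrass_exists Z hZc hZd dOf hm hm0
  set γ : ℂ → ℂ := fun z => limUnder (nhdsWithin z {z}ᶜ) (fun w => W w / S w) with hγdef
  have hloc : ∀ z₀ : ℂ, DifferentiableAt ℝ γ z₀ ∧ γ z₀ ≠ 0 ∧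
      ∀ i, DifferentiableAt ℂ (fun z => γ z * X i z) z₀ := by
    intro z₀
    obtain ⟨A, hAan, hA0, hAev⟩ := hWfact z₀
    obtain ⟨B, hBan, hB0, hBev⟩ := hfact z₀
    have hnbhd : {z | W z = (z - z₀) ^ dOf z₀ * A z} ∩ ({z | Hf z₀ z = (z - z₀) ^ dOf z₀ * B z}
        ∩ ({z | A z ≠ 0} ∩ ({z | B z ≠ 0} ∩ {z | X (J z₀) z ≠ 0}))) ∈ nhds z₀ :=
      inter_mem hAev (inter_mem hBev (inter_mem (hAan.continuousAt.eventually_ne hA0)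
        (inter_mem (hBan.continuousAt.eventually_ne hB0)
          (((hXcont (J z₀)).continuousAt).eventually_ne (hJne z₀)))))
    obtain ⟨U, hUsub, hUopen, hUz₀⟩ := _root_.mem_nhds_iff.mp hnbhd
    set Φ : ℂ → ℂ := fun z => A z / (B z * X (J z₀) z) with hΦ
    have hUprop : ∀ z ∈ U, W z = (z - z₀) ^ dOf z₀ * A z
        ∧ Hf z₀ z = (z - z₀) ^ dOf z₀ * B z ∧ A z ≠ 0 ∧ B z ≠ 0 ∧ X (J z₀) z ≠ 0 := by
      intro z hz
      have h := hUsub hz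
      simp only [mem_inter_iff, mem_setOf_eq] at h
      tauto
    have hSz : ∀ z ∈ U, S z = (z - z₀) ^ dOf z₀ * B z * X (J z₀) z := by
      intro z hz
      obtain ⟨h1, h2, h3, h4, h5⟩ := hUprop z hz
      have h6 : Hf z₀ z * X (J z₀) z = S z := div_mul_cancel₀ _ h5
      rw [← h6, h2]
    have hWS : ∀ z ∈ U, z ≠ z₀ → W z / S z = Φ z := by
      intro z hz hne
      obtain ⟨h1, h2, h3, h4, h5⟩ := hUprop z hz
      rw [h1, hSz z hz, hΦ]
      have hpow : (z - z₀) ^ dOf z₀ ≠ 0 := pow_ne_zero _ (sub_ne_zero.mpr hne)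
      field_simp
    have hγU : ∀ z ∈ U, γ z = Φ z := by
      intro z hz
      by_cases hzz : z = z₀
      · subst hzz
        have hΦc : ContinuousAt Φ z := by
          obtain ⟨h1, h2, h3, h4, h5⟩ := hUprop z hz
          exact (hAan.continuousAt).div
            ((hBan.continuousAt).mul ((hXcont (J z)).continuousAt)) (mul_ne_zero h4 h5)
        have hWSU : (fun w => W w / S w) =ᶠ[nhdsWithin z {z}ᶜ] Φ := by
          have hmem : (U ∩ {z}ᶜ) ∈ nhdsWithin z {z}ᶜ :=
            inter_mem (mem_nhdsWithin_of_mem_nhds (hUopen.mem_nhds hz)) self_mem_nhdsWithin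
          filter_upwards [hmem] with w hw
          exact hWS w hw.1 hw.2
        have htend : Filter.Tendsto (fun w => W w / S w) (nhdsWithin z {z}ᶜ) (nhds (Φ z)) :=
          Filter.Tendsto.congr' hWSU.symm ((hΦc.tendsto).mono_left nhdsWithin_le_nhds)
        exact htend.limUnder_eq
      · have hSne : S z ≠ 0 := by
          rw [hSz z hz]
          obtain ⟨h1, h2, h3, h4, h5⟩ := hUprop z hz
          exact mul_ne_zero (mul_ne_zero (pow_ne_zero _ (sub_ne_zero.mpr hzz)) h4) h5
        have hc : ContinuousAt (fun w => W w / S w) z :=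
          ((hWdiff z).restrictScalars ℝ).continuousAt.div (hScont.continuousAt) hSne
        have htend : Filter.Tendsto (fun w => W w / S w) (nhdsWithin z {z}ᶜ) (nhds (W z / S z)) :=
          (hc.tendsto).mono_left nhdsWithin_le_nhds
        show limUnder (nhdsWithin z {z}ᶜ) (fun w => W w / S w) = Φ z
        rw [htend.limUnder_eq]
        exact hWS z hz hzz
    have hγev : γ =ᶠ[nhds z₀] Φ :=
      Filter.eventually_of_mem (hUopen.mem_nhds hUz₀) hγU
    obtain ⟨hp1, hp2, hpA, hpB, hpX⟩ := hUprop z₀ hUz₀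
    have hΦdiffR : DifferentiableAt ℝ Φ z₀ := by
      have h := ((hAan.differentiableAt).restrictScalars ℝ).fun_mul
        (((((hBan.differentiableAt).restrictScalars ℝ).fun_mul ((hXdiff (J z₀)) z₀))).fun_inv
          (mul_ne_zero hpB hpX))
      show DifferentiableAt ℝ (fun z => A z / (B z * X (J z₀) z)) z₀
      simpa [div_eq_mul_inv] using h
    refine ⟨?_, ?_, ?_⟩
    · exact hγev.differentiableAt_iff.mpr hΦdiffR
    · rw [hγU z₀ hUz₀]
      exact div_ne_zero hpA (mul_ne_zero hpB hpX)
    · intro i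
      have hG : DifferentiableAt ℂ (fun z => (A z / B z) * (X i z / X (J z₀) z)) z₀ := by
        apply AnalyticAt.differentiableAt
        exact (hAan.div hBan hpB).mul
          (ratioAnalytic (X i) (hXdiff i) (fun z => hk' z i) (J z₀) z₀ hpX)
      have heq : (fun z => γ z * X i z)
          =ᶠ[nhds z₀] (fun z => (A z / B z) * (X i z / X (J z₀) z)) := by
        filter_upwards [hUopen.mem_nhds hUz₀] with z hz
        obtain ⟨h1, h2, h3, h4, h5⟩ := hUprop z hz
        rw [hγU z hz, hΦ]
        field_simp
      exact heq.differentiableAt_iff.mpr hG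
  -- assemble c
  refine ⟨fun p => γ ((eRP.symm : ℝ × ℝ → ℂ) p), ?_, ?_, ?_⟩
  · intro p
    exact ((hloc _).1).comp p (eRP.symm.differentiableAt)
  · intro p
    exact (hloc _).2.1
  · intro p
    funext i
    set z₀ : ℂ := (eRP.symm : ℝ × ℝ → ℂ) p with hz₀
    set F : ℂ → ℂ := fun z => γ z * X i z with hF
    have hFc : (fun q => γ ((eRP.symm : ℝ × ℝ → ℂ) q) * x q i)
        = F ∘ (eRP.symm : ℝ × ℝ → ℂ) := by
      funext q
      show γ ((eRP.symm : ℝ × ℝ → ℂ) q) * x q i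
        = γ ((eRP.symm : ℝ × ℝ → ℂ) q) * X i ((eRP.symm : ℝ × ℝ → ℂ) q)
      have hXq : X i ((eRP.symm : ℝ × ℝ → ℂ) q) = x q i := by
        show x (eRP ((eRP.symm : ℝ × ℝ → ℂ) q)) i = x q i
        rw [eRP.apply_symm_apply]
      rw [hXq]
    have hFdiffR : DifferentiableAt ℝ F z₀ := ((hloc z₀).2.2 i).restrictScalars ℝ
    have hchain : fderiv ℝ (F ∘ (eRP.symm : ℝ × ℝ → ℂ)) p
        = (fderiv ℝ F z₀).comp (eRP.symm : ℝ × ℝ →L[ℝ] ℂ) := by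
      rw [fderiv_comp p hFdiffR eRP.symm.differentiableAt, eRP.symm.fderiv]
    have hdm0 : dm F z₀ = 0 := dm_eq_zero_of_cdiff ((hloc z₀).2.2 i)
    simp only [vpdm, vpd1, vpd2, Pi.smul_apply, Pi.add_apply, Pi.zero_apply, smul_eq_mul]
    rw [show (fun q => γ ((eRP.symm : ℝ × ℝ → ℂ) q) * x q i)
      = F ∘ (eRP.symm : ℝ × ℝ → ℂ) from hFc]
    rw [hchain]
    simp only [ContinuousLinearMap.comp_apply, ContinuousLinearEquiv.coe_coe, eRP_symm_one,
      eRP_symm_I]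
    have hfin : (fderiv ℝ F z₀ 1 + Complex.I * fderiv ℝ F z₀ Complex.I) / 2 = 0 := hdm0
    linear_combination hfin


/-- A differentiable nonvanishing vector family `x` is holomorphic up to scaling
(there is a nonvanishing differentiable scalar `c` with `∂₋(c x) = 0`) iff `∂₋x` is
pointwise proportional to `x`. -/
theorem holomorphic_iff_proportional {N : ℕ} (x : ℝ × ℝ → Fin N → ℂ)
    (hdiff : ∀ i, Differentiable ℝ fun q => x q i)
    (hx : ∀ p, x p ≠ 0) :
    (∃ c : ℝ × ℝ → ℂ, Differentiable ℝ c ∧ (∀ p, c p ≠ 0) ∧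
        ∀ p, vpdm (fun q => c q • x q) p = 0) ↔
      ∀ p, ∃ k : ℂ, vpdm x p = k • x p := by
  constructor
  · rintro ⟨c, hc, hc0, hcx⟩
    exact forward_direction x hdiff hx c hc hc0 hcx
  · intro hyp
    exact reverse_direction x hdiff hx hyp
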